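/- Under the hypotheses of the Zygmund lemma (contraction semigroup R_t with ‖D²R_tφ‖₀ ≤ C₀ t^{-1}‖φ‖₀ on (0,1] and ‖R_tf - f‖₀ ≤ N t^{1/2} on [0,1]), the rescaled semigroup R̂_t = e^{-t}R_t satisfies ‖D² R̂_t f‖₀ ≤ 4C₀(N + ‖f‖₀) t^{-1/2} for t ∈ (0, 1/2]. -/

import Mathlib

open Real Set

set_option maxHeartbeats 1600000 in
/-- Under the hypotheses of the Zygmund lemma, the rescaled semigroup
`R̂_t = e^{-t} R_t` satisfies `‖D² R̂_t f‖₀ ≤ 4C₀(N + ‖f‖₀) t^{-1/2}` for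
`t ∈ (0, 1/2]`. -/
theorem rescaled_semigroup_second_derivative_bound
    {H : Type*} [NormedAddCommGroup H] [InnerProductSpace ℝ H]
    (R : ℝ → (H → ℝ) → (H → ℝ))
    (hR0 : ∀ φ, R 0 φ = φ)
    (hRsg : ∀ s t : ℝ, 0 ≤ s → 0 ≤ t → ∀ φ, R (s + t) φ = R s (R t φ))
    (hlin : ∀ t : ℝ, 0 ≤ t → IsLinearMap ℝ (R t))
    (hRcont : ∀ t : ℝ, 0 ≤ t → ∀ φ : H → ℝ, Continuous φ → Continuous (R t φ))
    (hcontr : ∀ t : ℝ, 0 ≤ t → ∀ (φ : H → ℝ) (C : ℝ),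
      (∀ x, |φ x| ≤ C) → ∀ x, |R t φ x| ≤ C)
    (C₀ : ℝ)
    (hsmooth : ∀ φ : H → ℝ, Continuous φ → ∀ t ∈ Ioc (0 : ℝ) 1, ContDiff ℝ 2 (R t φ))
    (hD2 : ∀ (φ : H → ℝ), Continuous φ → ∀ C : ℝ, (∀ x, |φ x| ≤ C) →
      ∀ t ∈ Ioc (0 : ℝ) 1, ∀ x, ‖iteratedFDeriv ℝ 2 (R t φ) x‖ ≤ C₀ / t * C)
    (f : H → ℝ) (hfc : Continuous f) (N Cf : ℝ)
    (hfb : ∀ x, |f x| ≤ Cf)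
    (hN : ∀ t ∈ Icc (0 : ℝ) 1, ∀ x, |R t f x - f x| ≤ N * Real.sqrt t) :
    ∀ t ∈ Ioc (0 : ℝ) (1 / 2), ∀ x,
      ‖iteratedFDeriv ℝ 2 (fun y => Real.exp (-t) * R t f y) x‖ ≤
        4 * C₀ * (N + Cf) / Real.sqrt t := by
  -- basic nonnegativity facts
  have hCf : 0 ≤ Cf := le_trans (abs_nonneg _) (hfb 0)
  have hN0 : 0 ≤ N := by
    have := hN 1 ⟨zero_le_one, le_refl 1⟩ 0
    simpa using le_trans (abs_nonneg _) this
  have hC₀ : 0 ≤ C₀ := by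
    have h1 : ∀ x : H, |(fun _ : H => (1:ℝ)) x| ≤ 1 := by intro x; simp
    have := hD2 (fun _ => 1) continuous_const 1 h1 1 ⟨one_pos, le_refl 1⟩ 0
    simpa using le_trans (norm_nonneg _) this
  have hs2 : Real.sqrt 2 * Real.sqrt 2 = 2 := Real.mul_self_sqrt (by norm_num)
  have hs2pos : 0 < Real.sqrt 2 := Real.sqrt_pos.mpr (by norm_num)
  -- direct bound for t ∈ (1/2, 1]
  have direct : ∀ t : ℝ, 1/2 < t → t ≤ 1 → ∀ x,
      ‖iteratedFDeriv ℝ 2 (R t f) x‖ ≤ 2 * C₀ * Cf := by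
    intro t ht ht1 x
    have h := hD2 f hfc Cf hfb t ⟨by linarith, ht1⟩ x
    have htpos : 0 < t := by linarith
    have : C₀ / t * Cf ≤ 2 * C₀ * Cf := by
      have h1 : C₀ / t ≤ 2 * C₀ := by
        rw [div_le_iff₀ htpos]; nlinarith
      exact mul_le_mul_of_nonneg_right h1 hCf
    linarith
  -- key dyadic induction
  have key : ∀ n : ℕ, ∀ t : ℝ, 0 < t → t ≤ 1 → 1/2 < 2^n * t → ∀ x,
      ‖iteratedFDeriv ℝ 2 (R t f) x‖ ≤
        C₀ * N * (2 + Real.sqrt 2) / Real.sqrt t + 2 * C₀ * Cf := by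
    intro n
    induction n with
    | zero =>
      intro t ht ht1 hhalf x
      simp only [pow_zero, one_mul] at hhalf
      have h1 : 0 ≤ C₀ * N * (2 + Real.sqrt 2) / Real.sqrt t := by
        apply div_nonneg _ (Real.sqrt_nonneg t)
        positivity
      have := direct t hhalf ht1 x
      linarith
    | succ n ih =>
      intro t ht ht1 hhalf x
      by_cases hc : 1/2 < t
      · have h1 : 0 ≤ C₀ * N * (2 + Real.sqrt 2) / Real.sqrt t := by
          apply div_nonneg _ (Real.sqrt_nonneg t)
          positivity
        have := direct t hc ht1 x
        linarith
      · push_neg at hc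
        have h2t0 : 0 < 2 * t := by linarith
        have h2t1 : 2 * t ≤ 1 := by linarith
        have hstpos : 0 < Real.sqrt t := Real.sqrt_pos.mpr ht
        have hst : Real.sqrt t * Real.sqrt t = t := Real.mul_self_sqrt ht.le
        -- φ = f - R t f
        set φ : H → ℝ := f - R t f with hφ
        have hφc : Continuous φ := hfc.sub (hRcont t ht.le f hfc)
        have hφb : ∀ x, |φ x| ≤ N * Real.sqrt t := by
          intro x
          have := hN t ⟨ht.le, ht1⟩ x
          have : |f x - R t f x| ≤ N * Real.sqrt t := by rwa [abs_sub_comm]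
          simpa [hφ] using this
        -- R t φ = R t f - R (2t) f
        have hsplit : R t φ = R t f - R (2 * t) f := by
          have h1 : R t φ = R t f - R t (R t f) := (hlin t ht.le).map_sub f (R t f)
          have h2 : R (2 * t) f = R t (R t f) := by
            rw [two_mul]; exact hRsg t t ht.le ht.le f
          rw [h1, h2]
        have hsum : R t f = fun y => R t φ y + R (2 * t) f y := by
          funext y
          have := congrFun hsplit y
          simp only [Pi.sub_apply] at this
          linarith
        have hc1 : ContDiff ℝ 2 (R t φ) := hsmooth φ hφc t ⟨ht, ht1⟩
        have hc2 : ContDiff ℝ 2 (R (2 * t) f) := hsmooth f hfc (2 * t) ⟨h2t0, h2t1⟩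
        have hadd : iteratedFDeriv ℝ 2 (R t f) x =
            iteratedFDeriv ℝ 2 (R t φ) x + iteratedFDeriv ℝ 2 (R (2 * t) f) x := by
          conv_lhs => rw [hsum]
          exact iteratedFDeriv_add_apply hc1.contDiffAt hc2.contDiffAt
        -- bound on the difference term
        have hd : ‖iteratedFDeriv ℝ 2 (R t φ) x‖ ≤ C₀ * N / Real.sqrt t := by
          have h := hD2 φ hφc (N * Real.sqrt t) hφb t ⟨ht, ht1⟩ x
          have heq : C₀ / t * (N * Real.sqrt t) = C₀ * N / Real.sqrt t := by
            field_simp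
            linear_combination C₀ * N * hst
          linarith [heq ▸ h]
        -- inductive bound on R (2t) f
        have h2n : 1/2 < 2^n * (2 * t) := by
          have : (2:ℝ)^(n+1) * t = 2^n * (2 * t) := by ring
          linarith [this ▸ hhalf]
        have hih := ih (2 * t) h2t0 h2t1 h2n x
        -- arithmetic: combine
        have hsqrt2t : Real.sqrt (2 * t) = Real.sqrt 2 * Real.sqrt t := by
          rw [Real.sqrt_mul (by norm_num : (0:ℝ) ≤ 2)]
        have harith : C₀ * N / Real.sqrt t +
            C₀ * N * (2 + Real.sqrt 2) / Real.sqrt (2 * t) =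
            C₀ * N * (2 + Real.sqrt 2) / Real.sqrt t := by
          rw [hsqrt2t]
          field_simp
          linear_combination (-(C₀ * N)) * hs2
        calc ‖iteratedFDeriv ℝ 2 (R t f) x‖
            ≤ ‖iteratedFDeriv ℝ 2 (R t φ) x‖ + ‖iteratedFDeriv ℝ 2 (R (2*t) f) x‖ := by
              rw [hadd]; exact norm_add_le _ _
          _ ≤ C₀ * N / Real.sqrt t +
              (C₀ * N * (2 + Real.sqrt 2) / Real.sqrt (2 * t) + 2 * C₀ * Cf) := by
              linarith
          _ = C₀ * N * (2 + Real.sqrt 2) / Real.sqrt t + 2 * C₀ * Cf := by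
              linarith [harith]
  -- main statement
  intro t ht x
  obtain ⟨ht0, ht12⟩ := ht
  have ht1 : t ≤ 1 := by linarith
  have hstpos : 0 < Real.sqrt t := Real.sqrt_pos.mpr ht0
  have hst : Real.sqrt t * Real.sqrt t = t := Real.mul_self_sqrt ht0.le
  -- find n with 1/2 < 2^n * t
  obtain ⟨n, hn⟩ := pow_unbounded_of_one_lt (1/(2*t)) (by norm_num : (1:ℝ) < 2)
  have hn' : 1/2 < 2^n * t := by
    have h2t : 0 < 2 * t := by linarith
    rw [div_lt_iff₀ h2t] at hn
    nlinarith
  have hkey := key n t ht0 ht1 hn' x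
  -- handle the exp factor
  have hsm : ContDiff ℝ 2 (R t f) := hsmooth f hfc t ⟨ht0, ht1⟩
  have hexp : iteratedFDeriv ℝ 2 (fun y => Real.exp (-t) * R t f y) x =
      Real.exp (-t) • iteratedFDeriv ℝ 2 (R t f) x := by
    have hfun : (fun y => Real.exp (-t) * R t f y) = Real.exp (-t) • R t f := rfl
    rw [hfun]
    exact iteratedFDeriv_const_smul_apply hsm.contDiffAt
  have hexple : ‖iteratedFDeriv ℝ 2 (fun y => Real.exp (-t) * R t f y) x‖ ≤
      ‖iteratedFDeriv ℝ 2 (R t f) x‖ := by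
    rw [hexp]
    have h1 : ‖Real.exp (-t)‖ ≤ 1 := by
      rw [Real.norm_eq_abs, abs_of_pos (Real.exp_pos _)]
      exact Real.exp_le_one_iff.mpr (by linarith)
    calc ‖Real.exp (-t) • iteratedFDeriv ℝ 2 (R t f) x‖
        ≤ ‖Real.exp (-t)‖ * ‖iteratedFDeriv ℝ 2 (R t f) x‖ := ContinuousMultilinearMap.opNorm_smul_le _ _
      _ ≤ 1 * ‖iteratedFDeriv ℝ 2 (R t f) x‖ :=
          mul_le_mul_of_nonneg_right h1 (norm_nonneg _)
      _ = _ := one_mul _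
  -- final arithmetic
  have hs2le : Real.sqrt 2 ≤ 2 := by
    nlinarith [hs2, hs2pos]
  have hstle : Real.sqrt t ≤ 1 := by
    nlinarith [hst, hstpos]
  have hfin : C₀ * N * (2 + Real.sqrt 2) / Real.sqrt t + 2 * C₀ * Cf ≤
      4 * C₀ * (N + Cf) / Real.sqrt t := by
    rw [div_add' _ _ _ (ne_of_gt hstpos), div_le_div_iff₀ hstpos hstpos]
    nlinarith [mul_nonneg (mul_nonneg hC₀ hCf) hstpos.le,
      mul_nonneg (mul_nonneg hC₀ hN0) hstpos.le]
  linarith
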